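/- There are no positive integers n, m, l and digits 1 ≤ a, b ≤ 9 such that ab·10^{m+l}·(φ+2)/162 = φ^{2n+1}, where φ = (1+√5)/2. -/

import Mathlib

noncomputable def φ : ℝ := (1 + Real.sqrt 5) / 2

lemma phi_eq_gold : φ = Real.goldenRatio := rfl

lemma phi_sq : φ ^ 2 = φ + 1 := by rw [phi_eq_gold]; exact Real.goldenRatio_sq

lemma phi_pow_fib (k : ℕ) : φ ^ (k + 1) = (Nat.fib (k + 1) : ℝ) * φ + (Nat.fib k : ℝ) := by
  induction k with
  | zero => simp
  | succ k ih =>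
    have : φ ^ (k + 2) = φ ^ (k + 1) * φ := by ring
    rw [this, ih, Nat.fib_add_two]
    push_cast
    nlinarith [phi_sq]

theorem Lambda_three_ne_zero :
    ¬∃ (n m l a b : ℕ), 1 ≤ n ∧ 1 ≤ m ∧ 1 ≤ l ∧ 1 ≤ a ∧ a ≤ 9 ∧ 1 ≤ b ∧ b ≤ 9 ∧
      (a : ℝ) * (b : ℝ) * 10 ^ (m + l) * (φ + 2) / 162 = φ ^ (2 * n + 1) := by
  rintro ⟨n, m, l, a, b, hn, hm, hl, ha1, ha9, hb1, hb9, heq⟩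
  set F1 : ℕ := Nat.fib (2 * n + 1) with hF1
  set F0 : ℕ := Nat.fib (2 * n) with hF0
  have hpow : φ ^ (2 * n + 1) = (F1 : ℝ) * φ + (F0 : ℝ) := phi_pow_fib (2 * n)
  set q : ℚ := (a : ℚ) * b * 10 ^ (m + l) / 162 with hq
  have hqr : ((q : ℝ)) = (a : ℝ) * (b : ℝ) * 10 ^ (m + l) / 162 := by
    rw [hq]; push_cast; ring
  have key : (q : ℝ) * φ + 2 * (q : ℝ) = (F1 : ℝ) * φ + (F0 : ℝ) := by
    rw [← hpow, ← heq, hqr]; ring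
  have hirr : Irrational φ := phi_eq_gold ▸ Real.goldenRatio_irrational
  have hq1 : (q : ℝ) = (F1 : ℝ) := by
    by_contra hne
    have h1 : φ = ((F0 : ℝ) - 2 * q) / (q - F1) := by
      field_simp [sub_ne_zero.mpr hne]
      linarith [key]
    have h2 : φ = (((F0 : ℚ) - 2 * q) / (q - (F1 : ℚ)) : ℚ) := by
      rw [h1]; push_cast; ring
    exact (Rat.not_irrational _) (h2 ▸ hirr)
  have h2q : (2 : ℝ) * q = (F0 : ℝ) := by
    have := key
    rw [hq1] at this
    linarith
  rw [hq1] at h2q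
  have hnat : 2 * F1 = F0 := by exact_mod_cast h2q
  have hpos : 0 < F1 := Nat.fib_pos.mpr (by omega)
  have hle : F0 ≤ F1 := by
    rw [hF0, hF1]
    exact Nat.fib_le_fib_succ
  omega
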